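/- Let F(y) = 1 + y^2/4 + y^4/64 + y^6/256 + (5/768) y^8 and N(y) = ∑_{j=0}^∞ binom(1/2, j)^2 y^{2j} (which equals the H^1(T^2) norm of z1 + y z2). Then the function y ↦ F(y)/N(y) is monotonically increasing on [0, 1]. -/

import Mathlib

/-- The generalized binomial coefficient `r(r-1)⋯(r-j+1)/j!`. -/
noncomputable def gbinom (r : ℝ) (j : ℕ) : ℝ :=
  (∏ k ∈ Finset.range j, (r - k)) / (Nat.factorial j)

/-- `F(y) = 1 + y²/4 + y⁴/64 + y⁶/256 + (5/768)y⁸`. -/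
noncomputable def F (y : ℝ) : ℝ :=
  1 + y ^ 2 / 4 + y ^ 4 / 64 + y ^ 6 / 256 + (5/768) * y ^ 8

/-- `N(y) = ∑_{j≥0} binom(1/2,j)² y^{2j}`, the `H¹(𝕋²)` norm of `z₁ + y z₂`. -/
noncomputable def N (y : ℝ) : ℝ := ∑' j : ℕ, gbinom (1/2) j ^ 2 * y ^ (2 * j)

open Finset Filter Topology
set_option maxHeartbeats 1600000

namespace Stmt9

noncomputable def a (j : ℕ) : ℝ := gbinom (1/2) j ^ 2

lemma N_eq (y : ℝ) : N y = ∑' j : ℕ, a j * y ^ (2 * j) := rfl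

lemma a_nonneg (j : ℕ) : 0 ≤ a j := sq_nonneg _

lemma gbinom_succ (r : ℝ) (j : ℕ) :
    gbinom r (j+1) = gbinom r j * (r - j) / (j+1) := by
  unfold gbinom
  rw [Finset.prod_range_succ, Nat.factorial_succ]
  have h1 : ((Nat.factorial j : ℝ)) ≠ 0 := by exact_mod_cast (Nat.factorial_pos j).ne'
  have h2 : ((j:ℝ)+1) ≠ 0 := by positivity
  push_cast
  field_simp

lemma a_succ (j : ℕ) : a (j+1) = a j * ((1/2 - j) / (j+1))^2 := by
  unfold a; rw [gbinom_succ]; ring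

lemma a0 : a 0 = 1 := by simp [a, gbinom]
lemma a1 : a 1 = 1/4 := by rw [a_succ, a0]; norm_num
lemma a2 : a 2 = 1/64 := by rw [a_succ, a1]; norm_num
lemma a3 : a 3 = 1/256 := by rw [a_succ, a2]; norm_num
lemma a4 : a 4 = 25/16384 := by rw [a_succ, a3]; norm_num

lemma a_rec (j : ℕ) : 4*((j:ℝ)+1)^2 * a (j+1) = (2*(j:ℝ)-1)^2 * a j := by
  rw [a_succ]
  have h2 : ((j:ℝ)+1) ≠ 0 := by positivity
  field_simp
  ring

lemma a_le (j : ℕ) (hj : 1 ≤ j) : a j ≤ 1/(4*(j:ℝ)^3) := by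
  induction j, hj using Nat.le_induction with
  | base => rw [a1]; norm_num
  | succ n hn ih =>
    have hn1 : (1:ℝ) ≤ (n:ℝ) := by exact_mod_cast hn
    have key := a_rec n
    have ih' : 4*(n:ℝ)^3 * a n ≤ 1 := by
      have h0 : (0:ℝ) < 4*(n:ℝ)^3 := by positivity
      calc 4*(n:ℝ)^3 * a n ≤ 4*(n:ℝ)^3 * (1/(4*(n:ℝ)^3)) := by
            exact mul_le_mul_of_nonneg_left ih h0.le
        _ = 1 := by field_simp
    have goal' : 4*((n:ℝ)+1)^3 * a (n+1) ≤ 1 := by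
      nlinarith [a_nonneg n, a_nonneg (n+1), sq_nonneg ((n:ℝ)-1)]
    have h0 : (0:ℝ) < 4*((n:ℝ)+1)^3 := by positivity
    rw [show ((n+1:ℕ):ℝ) = (n:ℝ)+1 by push_cast; ring]
    rw [le_div_iff₀ h0]
    linarith [goal']

lemma a_bound (j : ℕ) : a j ≤ 4/((j:ℝ)+1)^2 := by
  rcases Nat.eq_zero_or_pos j with h | h
  · subst h; rw [a0]; norm_num
  · have h1 : (1:ℝ) ≤ (j:ℝ) := by exact_mod_cast h
    have := a_le j h
    have h2 : 1/(4*(j:ℝ)^3) ≤ 4/((j:ℝ)+1)^2 := by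
      rw [div_le_div_iff₀ (by positivity) (by positivity)]
      nlinarith [mul_le_mul_of_nonneg_left h1 (by positivity : (0:ℝ) ≤ (j:ℝ)^2)]
    linarith

lemma ja_bound (j : ℕ) : (j:ℝ) * a j ≤ 4/((j:ℝ)+1)^2 := by
  rcases Nat.eq_zero_or_pos j with h | h
  · subst h; norm_num
  · have h1 : (1:ℝ) ≤ (j:ℝ) := by exact_mod_cast h
    have h3 : (j:ℝ) * a j ≤ (j:ℝ) * (1/(4*(j:ℝ)^3)) :=
      mul_le_mul_of_nonneg_left (a_le j h) (by linarith)
    have he : (j:ℝ) * (1/(4*(j:ℝ)^3)) = 1/(4*(j:ℝ)^2) := by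
      field_simp
    rw [he] at h3
    have h2 : 1/(4*(j:ℝ)^2) ≤ 4/((j:ℝ)+1)^2 := by
      rw [div_le_div_iff₀ (by positivity) (by positivity)]
      nlinarith
    linarith

lemma base_summable : Summable (fun j : ℕ => 4/((j:ℝ)+1)^2) := by
  have h : Summable (fun n : ℕ => 1/(n:ℝ)^2) :=
    Real.summable_one_div_nat_pow.mpr one_lt_two
  have h2 : Summable (fun n : ℕ => 1/((n+1:ℕ):ℝ)^2) := (summable_nat_add_iff 1).mpr h
  have h3 : Summable (fun n : ℕ => 1/((n:ℝ)+1)^2) := by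
    convert h2 using 2 with n; push_cast; ring
  simpa [div_eq_mul_inv] using h3.mul_left 4

lemma summable_of_bound {f : ℕ → ℝ} {C : ℝ} (h : ∀ j, |f j| ≤ C/((j:ℝ)+1)^2) :
    Summable f := by
  have hg : Summable (fun j : ℕ => C/((j:ℝ)+1)^2) := by
    have := base_summable.mul_left (C/4)
    apply this.congr; intro n
    ring
  exact Summable.of_norm_bounded hg (by simpa using h)

lemma abs_a (j : ℕ) : |a j| ≤ 4/((j:ℝ)+1)^2 := by
  rw [abs_of_nonneg (a_nonneg j)]; exact a_bound j
lemma abs_ja (j : ℕ) : |(j:ℝ) * a j| ≤ 4/((j:ℝ)+1)^2 := by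
  rw [abs_of_nonneg (mul_nonneg (Nat.cast_nonneg j) (a_nonneg j))]; exact ja_bound j

lemma summable_a : Summable a := summable_of_bound abs_a
lemma summable_ja : Summable (fun j : ℕ => (j:ℝ) * a j) := summable_of_bound abs_ja

lemma tele (J : ℕ) : ∑ j ∈ range J, (4*(j:ℝ)-1)*a j = -(4*(J:ℝ)^2*a J) := by
  induction J with
  | zero => simp
  | succ n ih =>
    rw [Finset.sum_range_succ, ih]
    push_cast
    linear_combination a_rec n

lemma key_id : ∑' j : ℕ, (j:ℝ) * a j = (∑' j : ℕ, a j)/4 := by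
  have hs : Summable (fun j : ℕ => (4*(j:ℝ)-1)*a j) := by
    apply summable_of_bound (C := 20)
    intro j
    have hr : (4*(j:ℝ)-1)*a j = 4*((j:ℝ)*a j) + (-(a j)) := by ring
    rw [hr]
    refine (abs_add_le _ _).trans ?_
    rw [abs_neg, abs_mul, abs_of_nonneg (by norm_num : (0:ℝ) ≤ 4)]
    have h1 := abs_a j; have h2 := abs_ja j
    have hb : 4*(4 / ((j:ℝ)+1)^2) + 4/((j:ℝ)+1)^2 = 20 / ((j:ℝ)+1)^2 := by ring
    linarith [mul_le_mul_of_nonneg_left h2 (by norm_num : (0:ℝ) ≤ 4)]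
  have hlim1 : Tendsto (fun J => ∑ j ∈ range J, (4*(j:ℝ)-1)*a j) atTop
      (𝓝 (∑' j : ℕ, (4*(j:ℝ)-1)*a j)) := hs.hasSum.tendsto_sum_nat
  have hlim2 : Tendsto (fun J : ℕ => ∑ j ∈ range J, (4*(j:ℝ)-1)*a j) atTop (𝓝 0) := by
    simp only [tele]
    apply squeeze_zero_norm' (a := fun J : ℕ => 1/(J:ℝ))
    · filter_upwards [eventually_ge_atTop 1] with J hJ
      have h1 : (1:ℝ) ≤ (J:ℝ) := by exact_mod_cast hJ
      have hle := a_le J hJ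
      rw [norm_neg, Real.norm_eq_abs,
        abs_of_nonneg (mul_nonneg (by positivity : (0:ℝ) ≤ 4*(J:ℝ)^2) (a_nonneg J))]
      have h2 : 4*(J:ℝ)^2 * a J ≤ 4*(J:ℝ)^2 * (1/(4*(J:ℝ)^3)) :=
        mul_le_mul_of_nonneg_left hle (by positivity)
      have h3 : 4*(J:ℝ)^2*(1/(4*(J:ℝ)^3)) = 1/(J:ℝ) := by
        field_simp
      linarith
    · exact tendsto_one_div_atTop_nhds_zero_nat
  have h0 : ∑' j : ℕ, (4*(j:ℝ)-1)*a j = 0 := tendsto_nhds_unique hlim1 hlim2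
  have hexp : ∑' j : ℕ, (4*(j:ℝ)-1)*a j = 4*(∑' j : ℕ, (j:ℝ)*a j) - ∑' j : ℕ, a j := by
    rw [← tsum_mul_left, ← Summable.tsum_sub (summable_ja.mul_left 4) summable_a]
    exact tsum_congr fun j => by ring
  rw [hexp] at h0
  linarith

/- Derivative and continuity of N -/

lemma term_nonneg (j : ℕ) (y : ℝ) : 0 ≤ a j * y^(2*j) := by
  have : 0 ≤ y^(2*j) := by rw [pow_mul]; positivity
  exact mul_nonneg (a_nonneg j) this

lemma pow2_abs_le (y : ℝ) (hy : |y| ≤ 1) (n : ℕ) : |y^n| ≤ 1 := by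
  rw [abs_pow]; exact pow_le_one₀ (abs_nonneg y) hy

lemma term_bound {y : ℝ} (hy : |y| ≤ 1) (j : ℕ) : |a j * y^(2*j)| ≤ 4/((j:ℝ)+1)^2 := by
  rw [abs_mul, abs_of_nonneg (a_nonneg j)]
  calc a j * |y^(2*j)| ≤ a j * 1 :=
        mul_le_mul_of_nonneg_left (pow2_abs_le y hy _) (a_nonneg j)
    _ ≤ 4/((j:ℝ)+1)^2 := by rw [mul_one]; exact a_bound j

lemma summable_pow {y : ℝ} (hy : |y| ≤ 1) : Summable (fun j : ℕ => a j * y^(2*j)) :=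
  summable_of_bound (term_bound hy)

lemma deriv_term_bound {x : ℝ} (hx : |x| ≤ 1) (n : ℕ) :
    ‖a n * (((2*n : ℕ):ℝ) * x^(2*n-1))‖ ≤ 16/((n:ℝ)+1)^2 := by
  rw [Real.norm_eq_abs, abs_mul, abs_of_nonneg (a_nonneg n), abs_mul, abs_pow]
  have h1 : |((2*n : ℕ):ℝ)| = 2*(n:ℝ) := by
    rw [abs_of_nonneg (by positivity)]; push_cast; ring
  rw [h1]
  have h2 : |x|^(2*n-1) ≤ 1 := pow_le_one₀ (abs_nonneg x) hx
  calc a n * (2*(n:ℝ) * |x|^(2*n-1)) ≤ a n * (2*(n:ℝ) * 1) := by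
        apply mul_le_mul_of_nonneg_left _ (a_nonneg n)
        apply mul_le_mul_of_nonneg_left h2 (by positivity)
    _ = 2*((n:ℝ) * a n) := by ring
    _ ≤ 2*(4/((n:ℝ)+1)^2) := by
        have := ja_bound n; linarith
    _ = 8/((n:ℝ)+1)^2 := by ring
    _ ≤ 16/((n:ℝ)+1)^2 := by gcongr <;> norm_num

lemma N_hasDerivAt {y : ℝ} (hy : y ∈ Set.Ioo (-1:ℝ) 1) :
    HasDerivAt N (∑' j : ℕ, a j * (((2*j : ℕ):ℝ) * y^(2*j-1))) y := by
  have h : HasDerivAt (fun z : ℝ => ∑' j : ℕ, a j * z^(2*j))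
      (∑' j : ℕ, a j * (((2*j : ℕ):ℝ) * y^(2*j-1))) y := by
    apply hasDerivAt_tsum_of_isPreconnected
      (u := fun j : ℕ => 16/((j:ℝ)+1)^2)
      (by
        have h := base_summable.mul_left 4
        apply h.congr; intro j; ring)
      isOpen_Ioo ((convex_Ioo (-1:ℝ) 1).isPreconnected)
      (fun n x _ => (hasDerivAt_pow (2*n) x).const_mul (a n))
      (fun n x hx => deriv_term_bound (by rw [Set.mem_Ioo] at hx; rw [abs_le]; exact ⟨hx.1.le, hx.2.le⟩) n)
      (Set.mem_Ioo.mpr ⟨by norm_num, by norm_num⟩)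
      (summable_pow (y := 0) (by norm_num))
      hy
  exact h

lemma N_contOn : ContinuousOn N (Set.Icc (-1:ℝ) 1) := by
  have h : ContinuousOn (fun x : ℝ => ∑' j : ℕ, a j * x^(2*j)) (Set.Icc (-1:ℝ) 1) := by
    apply continuousOn_tsum (u := fun j : ℕ => 4/((j:ℝ)+1)^2)
      (fun i => (by continuity : Continuous fun x : ℝ => a i * x^(2*i)).continuousOn)
      base_summable
    intro n x hx
    rw [Set.mem_Icc] at hx
    exact term_bound (abs_le.mpr ⟨hx.1, hx.2⟩) n
  exact h

lemma N_ge_one {y : ℝ} (hy : |y| ≤ 1) : 1 ≤ N y := by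
  have h := Summable.le_tsum (summable_pow hy) 0 (fun j _ => term_nonneg j y)
  simpa [N_eq, a0] using h

lemma W_eq (y : ℝ) :
    y * (∑' j : ℕ, a j * (((2*j : ℕ):ℝ) * y^(2*j-1))) = ∑' j : ℕ, 2*(j:ℝ)*a j*y^(2*j) := by
  rw [← tsum_mul_left]
  apply tsum_congr
  intro j
  cases j with
  | zero => simp
  | succ k =>
    have h : 2*(k+1) - 1 = 2*k+1 := by omega
    rw [h]
    have h2 : 2*(k+1) = (2*k+1)+1 := by omega
    rw [h2, pow_succ]
    push_cast
    ring

/- The core inequality -/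

noncomputable def W (y : ℝ) : ℝ := ∑' j : ℕ, 2*(j:ℝ)*a j*y^(2*j)
noncomputable def P (y : ℝ) : ℝ := 1 + y^2/4 + y^4/64 + y^6/256 + (25/16384)*y^8
noncomputable def YP (y : ℝ) : ℝ := y^2/2 + y^4/16 + 3*y^6/128 + (25/2048)*y^8
noncomputable def Fd (y : ℝ) : ℝ := y/2 + y^3/16 + 3*y^5/128 + (5/96)*y^7

section core
variable {y : ℝ} (hy0 : 0 ≤ y) (hy1 : y ≤ 1)

include hy0 hy1

lemma habs : |y| ≤ 1 := by rw [abs_le]; constructor <;> linarith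

lemma s1 : Summable (fun j : ℕ => a j * y^(2*j)) := summable_pow (habs hy0 hy1)

lemma s2 : Summable (fun j : ℕ => 2*(j:ℝ)*a j*y^(2*j)) := by
  apply summable_of_bound (C := 8)
  intro j
  rw [abs_mul]
  have h1 : |2*(j:ℝ)*a j| = 2*((j:ℝ)*a j) := by
    rw [abs_of_nonneg (by
      have := mul_nonneg (Nat.cast_nonneg (α := ℝ) j) (a_nonneg j); linarith)]
    ring
  rw [h1]
  calc 2*((j:ℝ)*a j) * |y^(2*j)| ≤ 2*((j:ℝ)*a j) * 1 := by
        apply mul_le_mul_of_nonneg_left (pow2_abs_le y (habs hy0 hy1) _)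
        have := mul_nonneg (Nat.cast_nonneg (α := ℝ) j) (a_nonneg j); linarith
    _ ≤ 8/((j:ℝ)+1)^2 := by
        rw [mul_one]
        have := ja_bound j
        have hb : 8/((j:ℝ)+1)^2 = 2*(4/((j:ℝ)+1)^2) := by ring
        linarith

lemma part2 : y^2 * ((15/2) * ∑' j : ℕ, a j) ≤ 8 * N y - W y := by
  have hy2 : y^2 ≤ 1 := pow_le_one₀ hy0 hy1
  have s3 : Summable (fun j : ℕ => (8-2*(j:ℝ))*a j*y^(2*j)) := by
    apply summable_of_bound (C := 40)
    intro j
    rw [abs_mul, abs_mul]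
    have h8 : |8-2*(j:ℝ)| ≤ 8 + 2*(j:ℝ) := by
      rw [abs_le]
      constructor <;> nlinarith [Nat.cast_nonneg (α := ℝ) j]
    have hya : |y^(2*j)| ≤ 1 := pow2_abs_le y (habs hy0 hy1) _
    have h1 : |8-2*(j:ℝ)| * |a j| * |y^(2*j)| ≤ (8 + 2*(j:ℝ)) * a j * 1 := by
      apply mul_le_mul _ hya (abs_nonneg _)
        (mul_nonneg (by positivity) (a_nonneg j))
      rw [abs_of_nonneg (a_nonneg j)]
      exact mul_le_mul_of_nonneg_right h8 (a_nonneg j)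
    have h2 : (8 + 2*(j:ℝ)) * a j ≤ 40/((j:ℝ)+1)^2 := by
      have hb1 := a_bound j; have hb2 := ja_bound j
      have hexp : (8 + 2*(j:ℝ))*a j = 8*(a j) + 2*((j:ℝ)*a j) := by ring
      have hv : 40/((j:ℝ)+1)^2 = 8*(4/((j:ℝ)+1)^2) + 2*(4/((j:ℝ)+1)^2) := by ring
      linarith
    linarith
  have s4 : Summable (fun j : ℕ => (8-2*(j:ℝ))*a j) := by
    have := (summable_a.mul_left 8).sub ((summable_ja.mul_left 2))
    apply this.congr; intro j; ring
  have hminus : 8 * N y - W y = ∑' j : ℕ, (8-2*(j:ℝ))*a j*y^(2*j) := by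
    rw [N_eq, W, ← tsum_mul_left, ← Summable.tsum_sub ((s1 hy0 hy1).mul_left 8) (s2 hy0 hy1)]
    exact tsum_congr fun j => by ring
  have hS1 : ∑' j : ℕ, (8-2*(j:ℝ))*a j = (15/2) * ∑' j : ℕ, a j := by
    have h := Summable.tsum_sub (summable_a.mul_left 8) (summable_ja.mul_left 2)
    have h2 : ∑' j : ℕ, (8-2*(j:ℝ))*a j
        = (∑' j : ℕ, 8 * a j) - ∑' j : ℕ, 2*((j:ℝ)*a j) := by
      rw [← h]; exact tsum_congr fun j => by ring
    rw [h2, tsum_mul_left, tsum_mul_left, key_id]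
    ring
  have sd : Summable (fun j : ℕ => (8-2*(j:ℝ))*a j*(y^(2*j)-y^2)) := by
    have := s3.sub (s4.mul_right (y^2))
    apply this.congr; intro j; ring
  have hsplit := (Summable.sum_add_tsum_nat_add 5 sd).symm
  have hfin : ∑ j ∈ range 5, (8-2*(j:ℝ))*a j*(y^(2*j)-y^2) =
      8*(1-y^2) + (1/16)*(y^4-y^2) + (1/128)*(y^6-y^2) := by
    simp [Finset.sum_range_succ, a0, a1, a2, a3, a4]
    norm_num
  have hfin_nonneg : 0 ≤ ∑ j ∈ range 5, (8-2*(j:ℝ))*a j*(y^(2*j)-y^2) := by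
    rw [hfin]
    nlinarith [hy2, sq_nonneg y, sq_nonneg (y^2), sq_nonneg (y^3), mul_nonneg hy0 hy0]
  have htail_nonneg : 0 ≤ ∑' k : ℕ, (8-2*((k+5:ℕ):ℝ))*a (k+5)*(y^(2*(k+5))-y^2) := by
    apply tsum_nonneg
    intro k
    have h1 : (8-2*((k+5:ℕ):ℝ))*a (k+5) ≤ 0 := by
      apply mul_nonpos_of_nonpos_of_nonneg _ (a_nonneg (k+5))
      push_cast
      nlinarith [Nat.cast_nonneg (α := ℝ) k]
    have h2 : y^(2*(k+5))-y^2 ≤ 0 := by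
      have := pow_le_pow_of_le_one hy0 hy1 (by omega : 2 ≤ 2*(k+5))
      linarith
    have := mul_nonneg (neg_nonneg.2 h1) (neg_nonneg.2 h2)
    rw [neg_mul_neg] at this
    exact this
  have hd_nonneg : 0 ≤ ∑' j : ℕ, (8-2*(j:ℝ))*a j*(y^(2*j)-y^2) := by
    rw [hsplit]
    exact add_nonneg hfin_nonneg htail_nonneg
  have hre : ∑' j : ℕ, (8-2*(j:ℝ))*a j*(y^(2*j)-y^2)
      = (∑' j : ℕ, (8-2*(j:ℝ))*a j*y^(2*j)) - y^2 * ∑' j : ℕ, (8-2*(j:ℝ))*a j := by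
    rw [← tsum_mul_left, ← Summable.tsum_sub s3 (s4.mul_left (y^2))]
    exact tsum_congr fun j => by ring
  rw [hminus]
  rw [hre, hS1] at hd_nonneg
  linarith

lemma part1 : y^10 * (-(1225/32768)) * (∑' j : ℕ, a j) ≤ YP y * N y - P y * W y := by
  have hy2 : y^2 ≤ 1 := pow_le_one₀ hy0 hy1
  have hy4 : y^4 ≤ 1 := pow_le_one₀ hy0 hy1
  have hy6 : y^6 ≤ 1 := pow_le_one₀ hy0 hy1
  have hy8 : y^8 ≤ 1 := pow_le_one₀ hy0 hy1
  have hP1 : 1 ≤ P y := by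
    have h2 : 0 ≤ y^2 := by positivity
    have h4 : 0 ≤ y^4 := by positivity
    have h6 : 0 ≤ y^6 := by positivity
    have h8 : 0 ≤ y^8 := by positivity
    unfold P; linarith
  have hPp : P y ≤ 20825/16384 := by unfold P; linarith
  have hYP0 : 0 ≤ YP y := by unfold YP; positivity
  have hYPq : YP y ≤ 9800/16384 := by
    have h2 : 0 ≤ y^2 := by positivity
    unfold YP; linarith
  set φ : ℕ → ℝ := fun j => YP y * (a j * y^(2*j)) - P y * (2*(j:ℝ)*a j*y^(2*j)) with hφ
  have hφsum : Summable φ := ((s1 hy0 hy1).mul_left (YP y)).sub ((s2 hy0 hy1).mul_left (P y))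
  have hLHS : YP y * N y - P y * W y = ∑' j : ℕ, φ j := by
    rw [N_eq, W, ← tsum_mul_left, ← tsum_mul_left,
      ← Summable.tsum_sub ((s1 hy0 hy1).mul_left (YP y)) ((s2 hy0 hy1).mul_left (P y))]
  have hsplit := (Summable.sum_add_tsum_nat_add 5 hφsum).symm
  have hfin : ∑ j ∈ range 5, φ j = 0 := by
    simp only [hφ, Finset.sum_range_succ, Finset.sum_range_zero, a0, a1, a2, a3, a4]
    unfold P YP
    push_cast
    ring
  have htail : ∀ k : ℕ, a (k+5) * (y^10 * (9800/16384 - 2*((k:ℝ)+5)*(20825/16384))) ≤ φ (k+5) := by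
    intro k
    have hk : (0:ℝ) ≤ (k:ℝ) := Nat.cast_nonneg k
    set m : ℝ := (k:ℝ)+5 with hm
    have hφval : φ (k+5) = a (k+5) * (y^(2*(k+5)) * (YP y - 2*m*P y)) := by
      simp only [hφ, hm]
      push_cast
      ring
    rw [hφval]
    apply mul_le_mul_of_nonneg_left _ (a_nonneg (k+5))
    have hneg : YP y - 2*m*P y ≤ 0 := by
      have h10 : 10*P y ≤ 2*m*P y := by nlinarith
      nlinarith
    have hyow : y^(2*(k+5)) ≤ y^10 := pow_le_pow_of_le_one hy0 hy1 (by omega)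
    have step1 : y^10 * (YP y - 2*m*P y) ≤ y^(2*(k+5)) * (YP y - 2*m*P y) :=
      mul_le_mul_of_nonpos_right hyow hneg
    have hpoly : 9800/16384 - YP y ≤ 10*(20825/16384 - P y) := by
      unfold P YP; linarith
    have hkey : 9800/16384 - 2*m*(20825/16384) ≤ YP y - 2*m*P y := by
      have h1 : 10*(20825/16384 - P y) ≤ 2*m*(20825/16384 - P y) := by
        have : 0 ≤ 20825/16384 - P y := by linarith
        nlinarith
      linarith
    have step2 : y^10 * (9800/16384 - 2*m*(20825/16384)) ≤ y^10 * (YP y - 2*m*P y) :=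
      mul_le_mul_of_nonneg_left hkey (by positivity)
    calc y^10 * (9800/16384 - 2*m*(20825/16384)) ≤ y^10 * (YP y - 2*m*P y) := step2
      _ ≤ y^(2*(k+5)) * (YP y - 2*m*P y) := step1
  have sψ : Summable (fun j : ℕ => a j * (y^10 * (9800/16384 - 2*(j:ℝ)*(20825/16384)))) := by
    have h := ((summable_a.mul_left (y^10*(9800/16384))).sub
      (summable_ja.mul_left (y^10*2*(20825/16384))))
    apply h.congr; intro j; ring
  have sψ5 : Summable (fun k : ℕ => a (k+5) * (y^10 * (9800/16384 - 2*((k:ℝ)+5)*(20825/16384)))) := by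
    have h := (summable_nat_add_iff 5).mpr sψ
    apply h.congr; intro k; push_cast; ring_nf
  have hφ5 : Summable (fun k : ℕ => φ (k+5)) := (summable_nat_add_iff 5).mpr hφsum
  have htail_sum : ∑' k : ℕ, a (k+5) * (y^10 * (9800/16384 - 2*((k:ℝ)+5)*(20825/16384)))
      ≤ ∑' k : ℕ, φ (k+5) := Summable.tsum_le_tsum htail sψ5 hφ5
  have SA : Summable (fun k : ℕ => a (k+5)) := (summable_nat_add_iff 5).mpr summable_a
  have SB : Summable (fun k : ℕ => ((k:ℝ)+5) * a (k+5)) := by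
    have h := (summable_nat_add_iff 5).mpr summable_ja
    apply h.congr; intro k; push_cast; ring
  have heval : ∑' k : ℕ, a (k+5) * (y^10 * (9800/16384 - 2*((k:ℝ)+5)*(20825/16384)))
      = (y^10*(9800/16384)) * (∑' k : ℕ, a (k+5))
        - (y^10*2*(20825/16384)) * (∑' k : ℕ, ((k:ℝ)+5) * a (k+5)) := by
    rw [← tsum_mul_left, ← tsum_mul_left,
      ← Summable.tsum_sub (SA.mul_left _) (SB.mul_left _)]
    exact tsum_congr fun k => by ring
  have hA : ∑' k : ℕ, a (k+5) = (∑' j : ℕ, a j) - 20825/16384 := by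
    have h := Summable.sum_add_tsum_nat_add 5 summable_a
    have hf : ∑ j ∈ range 5, a j = 20825/16384 := by
      simp [Finset.sum_range_succ, a0, a1, a2, a3, a4]; norm_num
    linarith
  have hB : ∑' k : ℕ, ((k:ℝ)+5) * a (k+5) = (∑' j : ℕ, a j)/4 - 4900/16384 := by
    have h := Summable.sum_add_tsum_nat_add 5 summable_ja
    have hf : ∑ j ∈ range 5, (j:ℝ) * a j = 4900/16384 := by
      simp [Finset.sum_range_succ, a0, a1, a2, a3, a4]; norm_num
    have hc : ∑' k : ℕ, ((k+5:ℕ):ℝ) * a (k+5) = ∑' k : ℕ, ((k:ℝ)+5) * a (k+5) :=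
      tsum_congr fun k => by push_cast; ring
    rw [hf, hc] at h
    rw [← key_id]
    linarith
  rw [hLHS, hsplit, hfin, zero_add]
  refine le_trans (le_of_eq ?_) (le_trans (le_of_eq heval.symm) htail_sum)
  rw [hA, hB]
  ring

lemma core : F y * W y ≤ y * Fd y * N y := by
  have e1 : F y = P y + (245/49152)*y^8 := by unfold F P; ring
  have e2 : y * Fd y = YP y + (245/6144)*y^8 := by unfold Fd YP; ring
  have hdecomp : y * Fd y * N y - F y * W y
      = (YP y * N y - P y * W y) + (245/49152)*y^8*(8*N y - W y) := by
    rw [e1, e2]; ring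
  have h1 := part1 hy0 hy1
  have h2 := part2 hy0 hy1
  have h3 : (245/49152)*y^8*(y^2 * ((15/2) * ∑' j : ℕ, a j))
      ≤ (245/49152)*y^8*(8*N y - W y) :=
    mul_le_mul_of_nonneg_left h2 (by positivity)
  have h4 : y^10 * (-(1225/32768)) * (∑' j : ℕ, a j)
      + (245/49152)*y^8*(y^2 * ((15/2) * ∑' j : ℕ, a j)) = 0 := by ring
  linarith [hdecomp, h1, h3, h4]

end core

lemma F_hasDerivAt (y : ℝ) : HasDerivAt F (Fd y) y := by
  have h : HasDerivAt (fun x : ℝ => 1 + x ^ 2 / 4 + x ^ 4 / 64 + x ^ 6 / 256 + (5/768) * x ^ 8)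
      (0 + ((2:ℕ):ℝ)*y^(2-1)/4 + ((4:ℕ):ℝ)*y^(4-1)/64 + ((6:ℕ):ℝ)*y^(6-1)/256
        + (5/768)*(((8:ℕ):ℝ)*y^(8-1))) y :=
    ((((hasDerivAt_const y (1:ℝ)).add ((hasDerivAt_pow 2 y).div_const 4)).add
      ((hasDerivAt_pow 4 y).div_const 64)).add ((hasDerivAt_pow 6 y).div_const 256)).add
      ((hasDerivAt_pow 8 y).const_mul (5/768))
  have h2 : (0 + ((2:ℕ):ℝ)*y^(2-1)/4 + ((4:ℕ):ℝ)*y^(4-1)/64 + ((6:ℕ):ℝ)*y^(6-1)/256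
        + (5/768)*(((8:ℕ):ℝ)*y^(8-1))) = Fd y := by
    unfold Fd; push_cast; norm_num; ring
  rw [h2] at h
  exact h

end Stmt9

open Stmt9 in
theorem stmt9 : MonotoneOn (fun y => F y / N y) (Set.Icc (0:ℝ) 1) := by
  have hsub : Set.Icc (0:ℝ) 1 ⊆ Set.Icc (-1:ℝ) 1 := by
    intro x hx; rw [Set.mem_Icc] at *; constructor <;> linarith [hx.1, hx.2]
  have hNpos : ∀ x ∈ Set.Icc (0:ℝ) 1, N x ≠ 0 := by
    intro x hx
    rw [Set.mem_Icc] at hx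
    have := N_ge_one (y := x) (abs_le.mpr ⟨by linarith [hx.1], hx.2⟩)
    linarith
  have hFc : Continuous F := by
    unfold F; continuity
  apply monotoneOn_of_deriv_nonneg (convex_Icc 0 1)
  · exact ContinuousOn.div hFc.continuousOn (N_contOn.mono hsub) hNpos
  · rw [interior_Icc]
    intro x hx
    rw [Set.mem_Ioo] at hx
    have hN := N_hasDerivAt (y := x) (Set.mem_Ioo.mpr ⟨by linarith [hx.1], hx.2⟩)
    have hne : N x ≠ 0 := hNpos x (Set.mem_Icc.mpr ⟨hx.1.le, hx.2.le⟩)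
    exact ((F_hasDerivAt x).div hN hne).differentiableAt.differentiableWithinAt
  · rw [interior_Icc]
    intro x hx
    rw [Set.mem_Ioo] at hx
    have hx0 : (0:ℝ) < x := hx.1
    have hx1 : x ≤ 1 := hx.2.le
    have hN := N_hasDerivAt (y := x) (Set.mem_Ioo.mpr ⟨by linarith, hx.2⟩)
    have hne : N x ≠ 0 := hNpos x (Set.mem_Icc.mpr ⟨hx0.le, hx1⟩)
    have hdiv := (F_hasDerivAt x).div hN hne
    rw [show (fun y => F y / N y) = F / N from rfl, hdiv.deriv]
    apply div_nonneg _ (sq_nonneg _)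
    -- numerator
    set Nd : ℝ := ∑' j : ℕ, a j * (((2*j : ℕ):ℝ) * x^(2*j-1)) with hNd
    have hWx : x * Nd = W x := by rw [hNd, W_eq]; rfl
    have hcore := core hx0.le hx1
    have hmul : 0 ≤ x * (Fd x * N x - F x * Nd) := by
      have hr : x * (Fd x * N x - F x * Nd) = x * Fd x * N x - F x * (x * Nd) := by ring
      rw [hr, hWx]
      linarith
    have := div_nonneg hmul hx0.le
    rwa [mul_div_cancel_left₀ _ (ne_of_gt hx0)] at this
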